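/- Let h, τ be nonzero real numbers, ν ∈ ℝ, and let u, ux, f : ℤ × ℤ → ℝ be grid functions (first index j spatial, second index n temporal) satisfying, for all j, n ∈ ℤ: (B1) h·(u(j+1,n+2) − u(j+1,n)) − τ·(ν·(ux(j+2,n+1) − ux(j,n+1)) − (f(j+2,n+1) − f(j,n+1))) = 0; (B2) 2·h·ux(j+1,n) = u(j+2,n) − u(j,n). Then for all j, n ∈ ℤ the explicit forward-time scheme for Burgers equation holds: (u(j+2,n+2) − u(j+2,n))/τ − ν·(u(j+4,n+1) − 2·u(j+2,n+1) + u(j,n+1))/(2·h²) + (f(j+3,n+1) − f(j+1,n+1))/h = 0. -/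

import Mathlib

theorem burgers_forward_time_scheme
    (h τ : ℝ) (hh : h ≠ 0) (hτ : τ ≠ 0) (ν : ℝ) (u ux f : ℤ × ℤ → ℝ)
    (B1 : ∀ j n : ℤ,
      h * (u (j + 1, n + 2) - u (j + 1, n)) -
        τ * (ν * (ux (j + 2, n + 1) - ux (j, n + 1)) -
              (f (j + 2, n + 1) - f (j, n + 1))) = 0)
    (B2 : ∀ j n : ℤ, 2 * h * ux (j + 1, n) = u (j + 2, n) - u (j, n)) :
    ∀ j n : ℤ,
      (u (j + 2, n + 2) - u (j + 2, n)) / τ -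
        ν * (u (j + 4, n + 1) - 2 * u (j + 2, n + 1) + u (j, n + 1)) / (2 * h ^ 2) +
        (f (j + 3, n + 1) - f (j + 1, n + 1)) / h = 0 := by
  intro j n
  have b1 := B1 (j + 1) n
  have b2a := B2 (j + 2) (n + 1)
  have b2b := B2 j (n + 1)
  have e1 : j + 1 + 1 = j + 2 := by ring
  have e2 : j + 1 + 2 = j + 3 := by ring
  have e3 : j + 2 + 1 = j + 3 := by ring
  have e4 : j + 2 + 2 = j + 4 := by ring
  simp only [e1, e2, e3, e4] at b1 b2a b2b
  field_simp
  linear_combination 2 * h * b1 + τ * ν * b2a - τ * ν * b2b
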